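/- Let H ∈ C²(ℝ² \ {0}) be an even, positively 1-homogeneous function with H(ξ) > 0 for all ξ ≠ 0, whose unit ball B₁ᴴ = {ξ : H(ξ) < 1} is strictly convex, and which satisfies condition (7.1): for all ξ, η ∈ ℝ², ⟨H(ξ)∇H(ξ), η⟩ = 0 if and only if ⟨ξ, H(η)∇H(η)⟩ = 0. Then, up to a rotation and a homothety of the plane ℝ², the unit ball B₁ᴴ has the form {(ρ cos θ, ρ sin θ) : ρ ∈ [0, r̃(θ)], θ ∈ [0, 2π]}, where r̃ is the π-periodic extension (defined via the map τ(η) = π/2 + η − arctan(r'(η)/r(η)) and the formula r̃(θ) = r* √(r(τ⁻¹(θ))² + r'(τ⁻¹(θ))²)/r(τ⁻¹(θ))² on [π/2, π]) of some positive C² function r on [0, π/2] satisfying r r'' < 2 r'² + r² almost everywhere on [0, π/2] and r(0) = 1, r(π/2) = r* ≥ 1, r'(0) = r'(π/2) = 0. -/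

import Mathlib

open Real Set MeasureTheory
open scoped InnerProductSpace Classical

noncomputable section

/-- The point of `ℝ²` (as a Euclidean space) with the given coordinates. -/
def toE2 (v : Fin 2 → ℝ) : EuclideanSpace ℝ (Fin 2) := (WithLp.equiv 2 (Fin 2 → ℝ)).symm v

/-- Rotation of the plane by the angle `φ`. -/
def rot2 (φ : ℝ) (x : EuclideanSpace ℝ (Fin 2)) : EuclideanSpace ℝ (Fin 2) :=
  toE2 ![cos φ * x 0 - sin φ * x 1, sin φ * x 0 + cos φ * x 1]

/-- The map `ξ ↦ H(ξ)∇H(ξ)`, understood to be `0` at the origin. -/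
def Psi (H : EuclideanSpace ℝ (Fin 2) → ℝ) (ξ : EuclideanSpace ℝ (Fin 2)) :
    EuclideanSpace ℝ (Fin 2) :=
  if ξ = 0 then 0 else H ξ • gradient H ξ

/- ### Auxiliary material -/

lemma core_lemma (h k k' : ℝ → ℝ)
    (hd : ∀ s, HasDerivAt h (k s) s)
    (kd : ∀ s, HasDerivAt k (k' s) s)
    (k'c : Continuous k')
    (hpos : ∀ s, 0 < h s)
    (hper : ∀ s, h (s + π) = h s)
    (hinv : ∀ s, k (s + π/2 + arctan (k s / h s)) * h s
        = -(k s * h (s + π/2 + arctan (k s / h s)))) :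
    (∀ s, 0 < h s + k' s) ∧
    (∀ s t, h (s + π/2 + arctan (k s / h s)) * Real.sqrt (h s^2 + k s^2)
        = h (t + π/2 + arctan (k t / h t)) * Real.sqrt (h t^2 + k t^2)) := by
  have hne : ∀ s, h s ≠ 0 := fun s => ne_of_gt (hpos s)
  have hQpos : ∀ s, 0 < h s ^ 2 + k s ^ 2 := fun s => by nlinarith [hpos s, sq_nonneg (k s)]
  set q : ℝ → ℝ := fun s => k s / h s with hq_def
  set q' : ℝ → ℝ := fun s => (k' s * h s - k s * k s) / (h s)^2 with hq'_def
  have qd : ∀ s, HasDerivAt q (q' s) s := fun s => (kd s).div (hd s) (hne s)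
  set g : ℝ → ℝ := fun s => s + π/2 + arctan (q s) with hg_def
  set G : ℝ → ℝ := fun s => 1 + q' s / (1 + q s ^ 2) with hG_def
  have hGval : ∀ s, G s = h s * (h s + k' s) / (h s ^ 2 + k s ^ 2) := by
    intro s
    show 1 + q' s / (1 + q s ^ 2) = _
    rw [hq'_def, hq_def]
    have h1 := hne s
    have h2 := ne_of_gt (hQpos s)
    field_simp
    ring
  have gd : ∀ s, HasDerivAt g (G s) s := by
    intro s
    have h1 : HasDerivAt (fun s => arctan (q s)) (1 / (1 + q s ^ 2) * q' s) s :=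
      (Real.hasDerivAt_arctan (q s)).comp s (qd s)
    have h2 : HasDerivAt g (1 + 1 / (1 + q s ^ 2) * q' s) s :=
      ((hasDerivAt_id s).add_const (π/2)).add h1
    convert h2 using 1
    show 1 + q' s / (1 + q s ^ 2) = _
    ring
  have hgs_eq : ∀ s, g s = s + π/2 + arctan (k s / h s) := fun s => rfl
  have hinv' : ∀ s, k (g s) * h s = -(k s * h (g s)) := by
    intro s; rw [hgs_eq s]; exact hinv s
  have hqg : ∀ s, q (g s) = - q s := by
    intro s
    show k (g s) / h (g s) = -(k s / h s)
    rw [← neg_div, div_eq_div_iff (hne (g s)) (hne s)]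
    linarith [hinv' s]
  have qgd : ∀ s, q' (g s) * G s = - q' s := by
    intro s
    have hfun : (fun s => q (g s)) = fun s => - q s := funext hqg
    have d1 : HasDerivAt (fun s => q (g s)) (q' (g s) * G s) s := (qd (g s)).comp s (gd s)
    rw [hfun] at d1
    exact d1.unique (qd s).neg
  have Gne : ∀ s, G s ≠ 0 := by
    intro s hG0
    have h1 := qgd s
    rw [hG0, mul_zero] at h1
    have hq'0 : q' s = 0 := by linarith
    have hGs1 : G s = 1 := by
      show 1 + q' s / (1 + q s ^ 2) = 1
      rw [hq'0]; simp
    rw [hGs1] at hG0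
    exact one_ne_zero hG0
  have hcont : Continuous h := by
    have : Differentiable ℝ h := fun s => (hd s).differentiableAt
    exact this.continuous
  have kcont : Continuous k := by
    have : Differentiable ℝ k := fun s => (kd s).differentiableAt
    exact this.continuous
  have q'cont : Continuous q' := by
    rw [hq'_def]
    exact ((k'c.mul hcont).sub (kcont.mul kcont)).div (hcont.pow 2)
      (fun s => pow_ne_zero 2 (hne s))
  have qcont : Continuous q := by
    rw [hq_def]; exact kcont.div hcont hne
  have Gcont : Continuous G := by
    rw [hG_def]
    exact continuous_const.add (q'cont.div (continuous_const.add (qcont.pow 2))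
      (fun s => by positivity))
  have kper : ∀ s, k (s + π) = k s := by
    intro s
    have d1 : HasDerivAt (fun s => h (s + π)) (k (s + π)) s := by
      have := (hd (s + π)).comp s ((hasDerivAt_id s).add_const π)
      simpa [Function.comp_def] using this
    have d2 : HasDerivAt (fun s => h (s + π)) (k s) s := by
      have hfe : (fun s => h (s + π)) = h := funext hper
      rw [hfe]; exact hd s
    exact d1.unique d2
  have gper : ∀ s, g (s + π) = g s + π := by
    intro s
    rw [hg_def]
    simp only [hq_def, kper s, hper s]
    ring
  have Gpos : ∀ s, 0 < G s := by
    by_contra hnot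
    push_neg at hnot
    obtain ⟨s₀, hs₀⟩ := hnot
    have hs₀' : G s₀ < 0 := lt_of_le_of_ne hs₀ (Gne s₀)
    have hallneg : ∀ s, G s < 0 := by
      intro s
      rcases (Gne s).lt_or_gt with hlt | hgt
      · exact hlt
      · exfalso
        have h0mem : (0 : ℝ) ∈ uIcc (G s₀) (G s) := by
          rw [Set.mem_uIcc]; left; exact ⟨le_of_lt hs₀', le_of_lt hgt⟩
        obtain ⟨c, _, hc⟩ := intermediate_value_uIcc (Gcont.continuousOn (s := uIcc s₀ s)) h0mem
        exact Gne c hc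
    have hanti : StrictAnti g := by
      apply strictAnti_of_deriv_neg
      intro s
      rw [(gd s).deriv]
      exact hallneg s
    have h1 := hanti pi_pos
    have h0 := gper 0
    rw [zero_add] at h0
    rw [h0] at h1
    linarith [pi_pos]
  have hpos' : ∀ s, 0 < h s + k' s := by
    intro s
    have hG := Gpos s
    rw [hGval s] at hG
    have h5 : 0 < h s * (h s + k' s) := by
      rcases div_pos_iff.mp hG with ⟨h6, _⟩ | ⟨_, h7⟩
      · exact h6
      · linarith [hQpos s]
    rcases mul_pos_iff.mp h5 with ⟨_, h8⟩ | ⟨h9, _⟩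
    · exact h8
    · linarith [hpos s]
  refine ⟨hpos', ?_⟩
  set F : ℝ → ℝ := fun s => h (g s) * Real.sqrt (h s^2 + k s^2) with hF_def
  have hSpos : ∀ s, 0 < Real.sqrt (h s ^ 2 + k s ^ 2) := fun s => Real.sqrt_pos.mpr (hQpos s)
  have Fd : ∀ s, HasDerivAt F 0 s := by
    intro s
    set S := Real.sqrt (h s ^ 2 + k s ^ 2) with hS_def
    have hQ : HasDerivAt (fun s => h s ^ 2 + k s ^ 2)
        (2 * h s * k s + 2 * k s * k' s) s := by
      have := (((hd s).pow 2)).add ((kd s).pow 2)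
      exact this.congr_deriv (by ring)
    have hS : HasDerivAt (fun s => Real.sqrt (h s ^ 2 + k s ^ 2))
        ((2 * h s * k s + 2 * k s * k' s) / (2 * S)) s := by
      have := (Real.hasDerivAt_sqrt (ne_of_gt (hQpos s))).comp s hQ
      exact this.congr_deriv (by rw [hS_def]; ring)
    have hhg : HasDerivAt (fun s => h (g s)) (k (g s) * G s) s := (hd (g s)).comp s (gd s)
    have hprod := hhg.mul hS
    have hS2 : S ^ 2 = h s ^ 2 + k s ^ 2 := Real.sq_sqrt (le_of_lt (hQpos s))
    have hSne : S ≠ 0 := ne_of_gt (hSpos s)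
    have hBa := hinv' s
    have key : k (g s) * G s * S
        + h (g s) * ((2 * h s * k s + 2 * k s * k' s) / (2 * S)) = 0 := by
      have hGS2 : G s * S ^ 2 = h s * (h s + k' s) := by
        rw [hGval s, hS2, div_mul_cancel₀ _ (ne_of_gt (hQpos s))]
      have expand : (k (g s) * G s * S
          + h (g s) * ((2 * h s * k s + 2 * k s * k' s) / (2 * S))) * S
          = k (g s) * (G s * S ^ 2) + h (g s) * (k s * (h s + k' s)) := by
        field_simp
      have hzero : (k (g s) * G s * S
          + h (g s) * ((2 * h s * k s + 2 * k s * k' s) / (2 * S))) * S = 0 := by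
        rw [expand, hGS2]
        linear_combination (h s + k' s) * hBa
      rcases mul_eq_zero.mp hzero with h1 | h1
      · exact h1
      · exact absurd h1 hSne
    rw [hF_def]
    rw [key] at hprod
    exact hprod
  have Fconst : ∀ s t, F s = F t :=
    is_const_of_deriv_eq_zero (fun s => (Fd s).differentiableAt) (fun s => (Fd s).deriv)
  intro s t
  have hst := Fconst s t
  rw [hF_def] at hst
  simpa only [hgs_eq] using hst

/-- The unit vector at angle `s`. -/
def uvec (s : ℝ) : EuclideanSpace ℝ (Fin 2) := toE2 ![Real.cos s, Real.sin s]

lemma toE2_apply (v : Fin 2 → ℝ) (i : Fin 2) : toE2 v i = v i := rfl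
lemma uvec_zero (s : ℝ) : uvec s 0 = Real.cos s := rfl
lemma uvec_one (s : ℝ) : uvec s 1 = Real.sin s := rfl

lemma E2_ext {x y : EuclideanSpace ℝ (Fin 2)} (h0 : x 0 = y 0) (h1 : x 1 = y 1) : x = y := by
  apply PiLp.ext; intro i; fin_cases i <;> assumption

lemma inner_E2 (x y : EuclideanSpace ℝ (Fin 2)) : ⟪x, y⟫_ℝ = x 0 * y 0 + x 1 * y 1 := by
  simp [PiLp.inner_apply, Fin.sum_univ_two]; ring

lemma smul_E2 (a : ℝ) (x : EuclideanSpace ℝ (Fin 2)) (i : Fin 2) : (a • x) i = a * x i := rfl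

lemma uvec_ne_zero (s : ℝ) : uvec s ≠ 0 := by
  intro hz
  have h0 : Real.cos s = 0 := by simpa [uvec_zero] using congrArg (fun v => v 0) hz
  have h1 : Real.sin s = 0 := by simpa [uvec_one] using congrArg (fun v => v 1) hz
  have := Real.sin_sq_add_cos_sq s
  rw [h0, h1] at this; norm_num at this

lemma hasDerivAt_uvec (s : ℝ) : HasDerivAt uvec (uvec (s + π/2)) s := by
  have h0 : HasDerivAt (fun s => Real.cos s) (-Real.sin s) s := Real.hasDerivAt_cos s
  have h1 : HasDerivAt (fun s => Real.sin s) (Real.cos s) s := Real.hasDerivAt_sin s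
  have hw : HasDerivAt (fun s => ![Real.cos s, Real.sin s] : ℝ → (Fin 2 → ℝ))
      (![-Real.sin s, Real.cos s]) s := by
    rw [hasDerivAt_pi]
    intro i; fin_cases i
    · simpa using h0
    · simpa using h1
  have hL := ((PiLp.continuousLinearEquiv 2 ℝ (fun _ : Fin 2 => ℝ)).symm :
      (Fin 2 → ℝ) →L[ℝ] EuclideanSpace ℝ (Fin 2)).hasFDerivAt.comp_hasDerivAt s hw
  have : uvec (s + π/2) = toE2 ![-Real.sin s, Real.cos s] := by
    apply E2_ext <;> simp [uvec, toE2_apply, Real.cos_add, Real.sin_add]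
  rw [this]; exact hL

lemma contDiff_uvec : ContDiff ℝ 2 uvec := by
  have hw : ContDiff ℝ 2 (fun s => ![Real.cos s, Real.sin s] : ℝ → (Fin 2 → ℝ)) := by
    apply contDiff_pi.mpr
    intro i; fin_cases i
    · simpa using (Real.contDiff_cos (n := 2))
    · simpa using (Real.contDiff_sin (n := 2))
  exact (((PiLp.continuousLinearEquiv 2 ℝ (fun _ : Fin 2 => ℝ)).symm :
      (Fin 2 → ℝ) →L[ℝ] EuclideanSpace ℝ (Fin 2)).contDiff).comp hw

lemma inner_gradient (H : EuclideanSpace ℝ (Fin 2) → ℝ) (ξ y : EuclideanSpace ℝ (Fin 2)) :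
    ⟪gradient H ξ, y⟫_ℝ = fderiv ℝ H ξ y := by
  rw [gradient]
  exact InnerProductSpace.toDual_symm_apply

lemma diffH (H : EuclideanSpace ℝ (Fin 2) → ℝ)
    (hreg : ContDiffOn ℝ 2 H {(0 : EuclideanSpace ℝ (Fin 2))}ᶜ)
    {ξ : EuclideanSpace ℝ (Fin 2)} (hξ : ξ ≠ 0) : DifferentiableAt ℝ H ξ := by
  have hopen : IsOpen ({(0 : EuclideanSpace ℝ (Fin 2))}ᶜ) := isOpen_compl_singleton
  exact (hreg.contDiffAt (hopen.mem_nhds (by simpa using hξ))).differentiableAt (by norm_num)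

lemma euler (H : EuclideanSpace ℝ (Fin 2) → ℝ)
    (hreg : ContDiffOn ℝ 2 H {(0 : EuclideanSpace ℝ (Fin 2))}ᶜ)
    (hhom : ∀ t : ℝ, 0 < t → ∀ ξ : EuclideanSpace ℝ (Fin 2), ξ ≠ 0 → H (t • ξ) = t * H ξ)
    {ξ : EuclideanSpace ℝ (Fin 2)} (hξ : ξ ≠ 0) :
    fderiv ℝ H ξ ξ = H ξ := by
  have hdH := diffH H hreg hξ
  have hc : HasDerivAt (fun t : ℝ => t • ξ) ξ 1 := by
    simpa using (hasDerivAt_id (1:ℝ)).smul_const ξ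
  have hcomp : HasDerivAt (fun t : ℝ => H (t • ξ)) (fderiv ℝ H ξ ξ) 1 := by
    have h1 : HasFDerivAt H (fderiv ℝ H ξ) ((1:ℝ) • ξ) := by
      rw [one_smul]; exact hdH.hasFDerivAt
    have := h1.comp_hasDerivAt 1 hc
    simpa [Function.comp_def] using this
  have heq : (fun t : ℝ => H (t • ξ)) =ᶠ[nhds (1:ℝ)] fun t => t * H ξ := by
    filter_upwards [eventually_gt_nhds (show (0:ℝ) < 1 by norm_num)] with t ht
    exact hhom t ht ξ hξ
  have hcomp' : HasDerivAt (fun t : ℝ => t * H ξ) (fderiv ℝ H ξ ξ) 1 :=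
    hcomp.congr_of_eventuallyEq heq.symm
  have hlin : HasDerivAt (fun t : ℝ => t * H ξ) (H ξ) 1 := by
    simpa using (hasDerivAt_id (1:ℝ)).mul_const (H ξ)
  exact hcomp'.unique hlin

set_option maxHeartbeats 1000000 in
/-- second part of Proposition 1.3 / Proposition 7.2: every even positive
1-homogeneous `H ∈ C²(ℝ² \ {0})` with strictly convex unit ball satisfying condition (7.1)
has, up to a rotation and a homothety of the plane, a unit ball of the polar form (7.7)
generated by some `C²` function `r` on `[0, π/2]` satisfying (7.3) a.e. and (7.4). -/
theorem planar_classification (H : EuclideanSpace ℝ (Fin 2) → ℝ)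
    (hreg : ContDiffOn ℝ 2 H {(0 : EuclideanSpace ℝ (Fin 2))}ᶜ)
    (heven : ∀ ξ : EuclideanSpace ℝ (Fin 2), H (-ξ) = H ξ)
    (hhom : ∀ t : ℝ, 0 < t → ∀ ξ : EuclideanSpace ℝ (Fin 2), ξ ≠ 0 → H (t • ξ) = t * H ξ)
    (hpos : ∀ ξ : EuclideanSpace ℝ (Fin 2), ξ ≠ 0 → 0 < H ξ) (hH0 : H 0 = 0)
    (hconv : StrictConvex ℝ {ξ : EuclideanSpace ℝ (Fin 2) | H ξ < 1})
    (h71 : ∀ ξ η : EuclideanSpace ℝ (Fin 2),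
      (⟪Psi H ξ, η⟫_ℝ = 0 ↔ ⟪ξ, Psi H η⟫_ℝ = 0)) :
    ∃ φ c : ℝ, 0 < c ∧ ∃ rstar : ℝ, 1 ≤ rstar ∧ ∃ r r1 r2 rt tau : ℝ → ℝ,
      r1 = derivWithin r (Icc 0 (π / 2)) ∧
      r2 = derivWithin r1 (Icc 0 (π / 2)) ∧
      ContDiffOn ℝ 2 r (Icc 0 (π / 2)) ∧
      (∀ θ ∈ Icc (0 : ℝ) (π / 2), 0 < r θ) ∧
      (∀ᵐ θ ∂(volume : Measure ℝ), θ ∈ Icc (0 : ℝ) (π / 2) →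
        r θ * r2 θ < 2 * r1 θ ^ 2 + r θ ^ 2) ∧
      r 0 = 1 ∧ r (π / 2) = rstar ∧ r1 0 = 0 ∧ r1 (π / 2) = 0 ∧
      (∀ η : ℝ, tau η = π / 2 + η - arctan (r1 η / r η)) ∧
      (∀ θ : ℝ, 0 < rt θ) ∧ Function.Periodic rt π ∧
      (∀ θ ∈ Icc (0 : ℝ) (π / 2), rt θ = r θ) ∧
      (∀ η ∈ Icc (0 : ℝ) (π / 2),
        rt (tau η) = rstar * Real.sqrt (r η ^ 2 + r1 η ^ 2) / r η ^ 2) ∧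
      (fun ξ : EuclideanSpace ℝ (Fin 2) => c • rot2 φ ξ) '' {ξ | H ξ ≤ 1}
        = {p : EuclideanSpace ℝ (Fin 2) | ∃ ρ θ : ℝ,
            0 ≤ ρ ∧ ρ ≤ rt θ ∧ θ ∈ Icc (0 : ℝ) (2 * π) ∧
            p = toE2 ![ρ * cos θ, ρ * sin θ]} := by
  classical
  -- the support-type function h and its derivatives
  set h : ℝ → ℝ := fun s => H (uvec s) with hh_def
  have h_cd : ContDiff ℝ 2 h := by
    rw [← contDiffOn_univ]
    exact hreg.comp (contDiff_uvec.contDiffOn)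
      (fun s _ => by simpa using uvec_ne_zero s)
  set k : ℝ → ℝ := deriv h with hk_def
  set k2 : ℝ → ℝ := deriv k with hk2_def
  have hdiff : Differentiable ℝ h := h_cd.differentiable (by norm_num)
  have hd : ∀ s, HasDerivAt h (k s) s := fun s => (hdiff s).hasDerivAt
  have hk_cd : ContDiff ℝ 1 k := by
    have h2 : ContDiff ℝ ((1 : ℕ) + 1) h := by exact_mod_cast h_cd
    exact (contDiff_succ_iff_deriv.mp h2).2.2
  have hkdiff : Differentiable ℝ k := (contDiff_one_iff_deriv.mp hk_cd).1
  have kd : ∀ s, HasDerivAt k (k2 s) s := fun s => (hkdiff s).hasDerivAt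
  have k2c : Continuous k2 := (contDiff_one_iff_deriv.mp hk_cd).2
  have hpos_h : ∀ s, 0 < h s := fun s => hpos _ (uvec_ne_zero s)
  have hne_h : ∀ s, h s ≠ 0 := fun s => ne_of_gt (hpos_h s)
  have huπ : ∀ s, uvec (s + π) = -uvec s := by
    intro s
    apply E2_ext
    · show Real.cos (s + π) = -(uvec s 0)
      rw [uvec_zero, Real.cos_add_pi]
    · show Real.sin (s + π) = -(uvec s 1)
      rw [uvec_one, Real.sin_add_pi]
  have hper_h : ∀ s, h (s + π) = h s := by
    intro s
    show H (uvec (s + π)) = H (uvec s)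
    rw [huπ s, heven]
  -- gradient decomposition
  have grad_eq : ∀ s, gradient H (uvec s) = h s • uvec s + k s • uvec (s + π/2) := by
    intro s
    have hE : ⟪gradient H (uvec s), uvec s⟫_ℝ = h s := by
      rw [inner_gradient]
      exact euler H hreg hhom (uvec_ne_zero s)
    have hT : ⟪gradient H (uvec s), uvec (s + π/2)⟫_ℝ = k s := by
      have hdH := diffH H hreg (uvec_ne_zero s)
      have hcomp : HasDerivAt h (fderiv ℝ H (uvec s) (uvec (s + π/2))) s :=
        hdH.hasFDerivAt.comp_hasDerivAt s (hasDerivAt_uvec s)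
      have heq := (hd s).unique hcomp
      rw [inner_gradient, ← heq]
    rw [inner_E2] at hE hT
    rw [uvec_zero, uvec_one] at hE hT
    have hc0 : uvec (s + π/2) 0 = -Real.sin s := by
      rw [uvec_zero, Real.cos_add]; simp
    have hc1 : uvec (s + π/2) 1 = Real.cos s := by
      rw [uvec_one, Real.sin_add]; simp
    rw [show Real.cos (s + π/2) = -Real.sin s by rw [Real.cos_add]; simp,
      show Real.sin (s + π/2) = Real.cos s by rw [Real.sin_add]; simp] at hT
    apply E2_ext
    · show gradient H (uvec s) 0 = (h s • uvec s + k s • uvec (s + π/2)) 0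
      have : (h s • uvec s + k s • uvec (s + π/2)) 0
          = h s * Real.cos s + k s * (-Real.sin s) := by
        show h s * uvec s 0 + k s * uvec (s + π/2) 0 = _
        rw [uvec_zero, hc0]
      rw [this]
      set w0 := gradient H (uvec s) 0
      set w1 := gradient H (uvec s) 1
      have hsc := Real.sin_sq_add_cos_sq s
      linear_combination (Real.cos s) * hE - (Real.sin s) * hT - w0 * hsc
    · show gradient H (uvec s) 1 = (h s • uvec s + k s • uvec (s + π/2)) 1
      have : (h s • uvec s + k s • uvec (s + π/2)) 1
          = h s * Real.sin s + k s * Real.cos s := by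
        show h s * uvec s 1 + k s * uvec (s + π/2) 1 = _
        rw [uvec_one, hc1]
      rw [this]
      set w0 := gradient H (uvec s) 0
      set w1 := gradient H (uvec s) 1
      have hsc := Real.sin_sq_add_cos_sq s
      linear_combination (Real.sin s) * hE + (Real.cos s) * hT - w1 * hsc
  -- the inner product of Psi with unit vectors
  have psi_inner : ∀ α β : ℝ, ⟪Psi H (uvec α), uvec β⟫_ℝ
      = h α * (h α * Real.cos (β - α) + k α * Real.sin (β - α)) := by
    intro α β
    rw [Psi, if_neg (uvec_ne_zero α), grad_eq α]
    have : H (uvec α) = h α := rfl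
    rw [this]
    rw [inner_E2]
    have e0 : (h α • (h α • uvec α + k α • uvec (α + π/2))) 0
        = h α * (h α * Real.cos α + k α * (-Real.sin α)) := by
      show h α * (h α * uvec α 0 + k α * uvec (α + π/2) 0) = _
      rw [uvec_zero]
      congr 2
      rw [uvec_zero, Real.cos_add]; simp
    have e1 : (h α • (h α • uvec α + k α • uvec (α + π/2))) 1
        = h α * (h α * Real.sin α + k α * Real.cos α) := by
      show h α * (h α * uvec α 1 + k α * uvec (α + π/2) 1) = _
      rw [uvec_one]
      congr 2
      rw [uvec_one, Real.sin_add]; simp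
    rw [e0, e1, uvec_zero, uvec_one, Real.cos_sub, Real.sin_sub]
    ring
  -- the involution identity from condition (7.1)
  have hinv_raw : ∀ s, k (s + π/2 + arctan (k s / h s)) * h s
      = -(k s * h (s + π/2 + arctan (k s / h s))) := by
    intro s
    set A := arctan (k s / h s) with hA_def
    set gs := s + π/2 + A with hgs_def
    have htan : Real.tan A = k s / h s := Real.tan_arctan _
    have hcApos : 0 < Real.cos A := Real.cos_arctan_pos _
    have hsin_eq : Real.sin A = Real.tan A * Real.cos A := by
      rw [Real.tan_eq_sin_div_cos]
      field_simp
    have hc : Real.cos (π/2 + A) = -Real.sin A := by rw [Real.cos_add]; simp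
    have hs' : Real.sin (π/2 + A) = Real.cos A := by rw [Real.sin_add]; simp
    have e : h s * (k s / h s) = k s := by
      rw [mul_comm (h s) _, div_mul_eq_mul_div, mul_div_assoc, div_self (hne_h s), mul_one]
    have h1 : ⟪Psi H (uvec s), uvec gs⟫_ℝ = 0 := by
      rw [psi_inner]
      have hd1 : gs - s = π/2 + A := by rw [hgs_def]; ring
      rw [hd1, hc, hs', hsin_eq, htan]
      linear_combination (-(h s) * Real.cos A) * e
    have h2 := (h71 (uvec s) (uvec gs)).mp h1
    rw [real_inner_comm, psi_inner] at h2
    have hd2 : s - gs = -(π/2 + A) := by rw [hgs_def]; ring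
    rw [hd2, Real.cos_neg, Real.sin_neg, hc, hs'] at h2
    have h3 : h gs * (-Real.sin A) + k gs * (-Real.cos A) = 0 := by
      rcases mul_eq_zero.mp h2 with h4 | h4
      · exact absurd h4 (hne_h gs)
      · linarith [h4]
    have h4 : h gs * Real.sin A + k gs * Real.cos A = 0 := by linarith
    rw [hsin_eq, htan] at h4
    have h6 : (h gs * (k s / h s) + k gs) * Real.cos A = 0 := by linear_combination h4
    have h5 : h gs * (k s / h s) + k gs = 0 := by
      rcases mul_eq_zero.mp h6 with h7 | h7
      · exact h7
      · exact absurd h7 (ne_of_gt hcApos)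
    linear_combination (h s) * h5 - h gs * e
  -- apply the core lemma
  obtain ⟨hcurv, hFconst⟩ := core_lemma h k k2 hd kd k2c hpos_h hper_h hinv_raw
  -- a maximum point of h
  have hP : Function.Periodic h π := hper_h
  obtain ⟨s0, hs0mem, hs0max⟩ := isCompact_Icc.exists_isMaxOn
    (Set.nonempty_Icc.mpr (le_of_lt pi_pos)) (h_cd.continuous.continuousOn (s := Icc 0 π))
  have hmax : ∀ t, h t ≤ h s0 := by
    intro t
    set n := ⌊t / π⌋ with hn_def
    have ht' : h (t - n * π) = h t := hP.sub_int_mul_eq n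
    have hmem : t - n * π ∈ Icc (0:ℝ) π := by
      have h1 : (n : ℝ) ≤ t / π := Int.floor_le _
      have h2 : t / π < n + 1 := Int.lt_floor_add_one _
      have h1' : (n : ℝ) * π ≤ t := (le_div_iff₀ pi_pos).mp h1
      have h2' : t < ((n : ℝ) + 1) * π := (div_lt_iff₀ pi_pos).mp h2
      constructor
      · linarith
      · linarith
    calc h t = h (t - n * π) := ht'.symm
      _ ≤ h s0 := hs0max hmem
  have hk_s0 : k s0 = 0 := by
    have hlm : IsLocalMax h s0 := by
      apply IsMaxOn.isLocalMax (s := univ)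
      · intro x _
        exact hmax x
      · exact Filter.univ_mem
    exact hlm.deriv_eq_zero
  have hk_s0' : k (s0 + π/2) = 0 := by
    have := hinv_raw s0
    rw [hk_s0] at this
    simp [arctan_zero] at this
    rcases this with h1 | h1
    · exact h1
    · exact absurd h1 (hne_h s0)
  -- the witnesses
  set c : ℝ := h s0 with hc_def
  have hcpos : 0 < c := hpos_h s0
  set rstar : ℝ := h s0 / h (s0 + π/2) with hrstar_def
  have hrstar1 : 1 ≤ rstar := by
    rw [hrstar_def, le_div_iff₀ (hpos_h (s0 + π/2)), one_mul]
    exact hmax (s0 + π/2)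
  set r : ℝ → ℝ := fun θ => c / h (θ + s0) with hr_def
  set r1 : ℝ → ℝ := derivWithin r (Icc 0 (π / 2)) with hr1_def
  set r2 : ℝ → ℝ := derivWithin r1 (Icc 0 (π / 2)) with hr2_def
  set tau : ℝ → ℝ := fun η => π / 2 + η - arctan (r1 η / r η) with htau_def
  have hrpos : ∀ θ, 0 < r θ := fun θ => div_pos hcpos (hpos_h (θ + s0))
  -- derivative formulas for r
  set R1 : ℝ → ℝ := fun θ => -(c * k (θ + s0)) / (h (θ + s0))^2 with hR1_def
  set R2 : ℝ → ℝ := fun θ => -(c * k2 (θ + s0)) / (h (θ + s0))^2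
      + 2 * c * (k (θ + s0))^2 / (h (θ + s0))^3 with hR2_def
  have hshift : ∀ θ, HasDerivAt (fun θ => h (θ + s0)) (k (θ + s0)) θ := by
    intro θ
    have := (hd (θ + s0)).comp θ ((hasDerivAt_id θ).add_const s0)
    simpa [Function.comp_def] using this
  have hshift2 : ∀ θ, HasDerivAt (fun θ => k (θ + s0)) (k2 (θ + s0)) θ := by
    intro θ
    have := (kd (θ + s0)).comp θ ((hasDerivAt_id θ).add_const s0)
    simpa [Function.comp_def] using this
  have rd : ∀ θ, HasDerivAt r (R1 θ) θ := by
    intro θ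
    have := (hasDerivAt_const θ c).div (hshift θ) (hne_h (θ + s0))
    refine this.congr_deriv ?_
    rw [hR1_def]
    field_simp
    ring
  have r1d : ∀ θ, HasDerivAt R1 (R2 θ) θ := by
    intro θ
    have hnum : HasDerivAt (fun θ => -(c * k (θ + s0))) (-(c * k2 (θ + s0))) θ :=
      ((hshift2 θ).const_mul c).neg
    have hden : HasDerivAt (fun θ => (h (θ + s0))^2) (2 * h (θ + s0) * k (θ + s0)) θ := by
      have := (hshift θ).pow 2
      exact this.congr_deriv (by ring)
    have := hnum.div hden (pow_ne_zero 2 (hne_h (θ + s0)))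
    refine this.congr_deriv ?_
    rw [hR2_def]
    have h1 := hne_h (θ + s0)
    field_simp
    ring
  have hUD : UniqueDiffOn ℝ (Icc (0:ℝ) (π/2)) := uniqueDiffOn_Icc (by positivity)
  have hr1_eq : ∀ θ ∈ Icc (0:ℝ) (π/2), r1 θ = R1 θ := by
    intro θ hθ
    rw [hr1_def, (rd θ).differentiableAt.derivWithin (hUD θ hθ), (rd θ).deriv]
  have hr2_eq : ∀ θ ∈ Icc (0:ℝ) (π/2), r2 θ = R2 θ := by
    intro θ hθ
    rw [hr2_def]
    have hcongr : derivWithin r1 (Icc 0 (π/2)) θ = derivWithin R1 (Icc 0 (π/2)) θ :=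
      derivWithin_congr (fun x hx => hr1_eq x hx) (hr1_eq θ hθ)
    rw [hcongr, (r1d θ).differentiableAt.derivWithin (hUD θ hθ), (r1d θ).deriv]
  refine ⟨-s0, c, hcpos, rstar, hrstar1, r, r1, r2, r, tau, rfl, rfl, ?_, ?_, ?_, ?_, ?_, ?_, ?_,
    fun η => rfl, fun θ => hrpos θ, ?_, fun θ _ => rfl, ?_, ?_⟩
  · -- ContDiffOn
    have : ContDiff ℝ 2 r := by
      apply ContDiff.div contDiff_const
      · exact h_cd.comp (contDiff_id.add contDiff_const)
      · exact fun θ => hne_h (θ + s0)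
    exact this.contDiffOn
  · exact fun θ _ => hrpos θ
  · -- the strict inequality (7.3), in fact everywhere
    apply MeasureTheory.ae_of_all
    intro θ hθ
    have hval0 : r θ = c / h (θ + s0) := rfl
    have hval1 : r1 θ = -(c * k (θ + s0)) / (h (θ + s0))^2 := (hr1_eq θ hθ).trans rfl
    have hval2 : r2 θ = -(c * k2 (θ + s0)) / (h (θ + s0))^2
        + 2 * c * (k (θ + s0))^2 / (h (θ + s0))^3 := (hr2_eq θ hθ).trans rfl
    rw [hval0, hval1, hval2]
    have ha := hpos_h (θ + s0)
    have hae := hcurv (θ + s0)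
    set a := h (θ + s0)
    set b := k (θ + s0)
    set e := k2 (θ + s0)
    have key : 2 * (-(c * b) / a^2)^2 + (c / a)^2
        - (c / a) * (-(c * e) / a^2 + 2 * c * b^2 / a^3)
        = c^2 * ((a + e) / a^3) := by
      field_simp
      ring
    have hposkey : 0 < c^2 * ((a + e) / a^3) := by positivity
    nlinarith [key, hposkey]
  · -- r 0 = 1
    show c / h (0 + s0) = 1
    rw [zero_add, ← hc_def, div_self (ne_of_gt hcpos)]
  · -- r (π/2) = rstar
    show c / h (π/2 + s0) = rstar
    rw [hrstar_def, hc_def, add_comm]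
  · -- r1 0 = 0
    have hval1 : r1 0 = -(c * k (0 + s0)) / (h (0 + s0))^2 :=
      (hr1_eq 0 ⟨le_refl 0, by positivity⟩).trans rfl
    rw [hval1, zero_add, hk_s0]
    simp
  · -- r1 (π/2) = 0
    have hval1 : r1 (π/2) = -(c * k (π/2 + s0)) / (h (π/2 + s0))^2 :=
      (hr1_eq (π/2) ⟨by positivity, le_refl _⟩).trans rfl
    rw [hval1, add_comm, hk_s0']
    simp
  · -- periodicity of rt = r
    intro θ
    show c / h ((θ + π) + s0) = c / h (θ + s0)
    have e1 : (θ + π) + s0 = (θ + s0) + π := by ring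
    rw [e1, hper_h]
  · -- the tau formula
    intro η hη
    set s := η + s0 with hs_def
    set a := h s with ha_def
    set b := k s with hb_def
    have hapos : 0 < a := hpos_h s
    have hane : a ≠ 0 := ne_of_gt hapos
    have hval1 : r1 η = -(c * b) / a^2 := (hr1_eq η hη).trans rfl
    have hval0 : r η = c / a := rfl
    have hq : r1 η / r η = -(b / a) := by
      rw [hval1, hval0]
      field_simp
    have harg : tau η + s0 = s + π/2 + arctan (b / a) := by
      show π / 2 + η - arctan (r1 η / r η) + s0 = _
      rw [hq, arctan_neg, hs_def]
      ring
    set A := h (s + π/2 + arctan (b / a)) with hA_def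
    have hApos : 0 < A := hpos_h _
    have hAne : A ≠ 0 := ne_of_gt hApos
    have hLHS : r (tau η) = c / A := by
      show c / h (tau η + s0) = c / A
      rw [harg]
    set B := h (s0 + π/2) with hB_def
    have hBpos : 0 < B := hpos_h _
    have hBne : B ≠ 0 := ne_of_gt hBpos
    set S := Real.sqrt (a^2 + b^2) with hS_def
    have hSpos : 0 < S := Real.sqrt_pos.mpr (add_pos_of_pos_of_nonneg (pow_pos hapos 2) (sq_nonneg b))
    have hSne : S ≠ 0 := ne_of_gt hSpos
    have hFs : A * S = B * c := by
      have h0 := hFconst s s0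
      rw [hk_s0] at h0
      rw [show (0:ℝ) / h s0 = 0 from zero_div _, arctan_zero, add_zero] at h0
      rw [show h s0 ^ 2 + (0:ℝ)^2 = h s0 ^2 by ring,
        Real.sqrt_sq (le_of_lt (hpos_h s0))] at h0
      exact h0
    have hS2 : S^2 = a^2 + b^2 := Real.sq_sqrt (by positivity)
    have hcne : c ≠ 0 := ne_of_gt hcpos
    have hsum : r η ^ 2 + r1 η ^ 2 = (c * S / a^2)^2 := by
      rw [hval0, hval1]
      field_simp
      linear_combination (-1 : ℝ) * hS2
    have hsqrt : Real.sqrt (r η ^ 2 + r1 η ^ 2) = c * S / a^2 := by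
      rw [hsum, Real.sqrt_sq (by positivity)]
    have hrstar_eq : rstar = c / B := by rw [hrstar_def, hB_def, hc_def]
    have hgoal2 : c / A = S / B := by
      rw [div_eq_div_iff hAne hBne]
      linear_combination -hFs
    rw [hLHS, hsqrt, hval0, hrstar_eq, hgoal2]
    field_simp
  · -- the set equality
    have rot_smul : ∀ (φ' a t : ℝ), rot2 φ' (a • uvec t) = a • uvec (t + φ') := by
      intro φ' a t
      apply E2_ext
      · show Real.cos φ' * (a • uvec t) 0 - Real.sin φ' * (a • uvec t) 1
            = (a • uvec (t + φ')) 0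
        rw [smul_E2, smul_E2, smul_E2, uvec_zero, uvec_one, uvec_zero, Real.cos_add]
        ring
      · show Real.sin φ' * (a • uvec t) 0 + Real.cos φ' * (a • uvec t) 1
            = (a • uvec (t + φ')) 1
        rw [smul_E2, smul_E2, smul_E2, uvec_zero, uvec_one, uvec_one, Real.sin_add]
        ring
    ext p
    simp only [Set.mem_image, Set.mem_setOf_eq]
    constructor
    · rintro ⟨ξ, hξ1, rfl⟩
      by_cases hz : ξ = 0
      · subst hz
        refine ⟨0, 0, le_refl 0, le_of_lt (hrpos 0), ⟨le_refl 0, by positivity⟩, ?_⟩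
        apply E2_ext
        · show c * (Real.cos (-s0) * (0:ℝ) - Real.sin (-s0) * (0:ℝ)) = 0 * Real.cos 0
          ring
        · show c * (Real.sin (-s0) * (0:ℝ) + Real.cos (-s0) * (0:ℝ)) = 0 * Real.sin 0
          ring
      · -- polar decomposition of ξ
        set z : ℂ := ⟨ξ 0, ξ 1⟩ with hz_def
        have hzne : z ≠ 0 := by
          intro h0
          apply hz
          apply E2_ext
          · simpa using congrArg Complex.re h0
          · simpa using congrArg Complex.im h0
        set a := ‖z‖ with ha_def
        have hapos : 0 < a := norm_pos_iff.mpr hzne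
        set t := z.arg with ht_def
        have hξ0 : ξ 0 = a * Real.cos t := by
          rw [Complex.cos_arg hzne]
          field_simp
          exact mul_comm _ _
        have hξ1' : ξ 1 = a * Real.sin t := by
          rw [Complex.sin_arg]
          field_simp
          exact mul_comm _ _
        have hξeq : ξ = a • uvec t := by
          apply E2_ext
          · rw [smul_E2, uvec_zero]; exact hξ0
          · rw [smul_E2, uvec_one]; exact hξ1'
        have hHξ : H ξ ≤ 1 := hξ1
        rw [hξeq, hhom a hapos (uvec t) (uvec_ne_zero t)] at hHξ
        set n := ⌊(t + -s0) / (2*π)⌋ with hn_def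
        set θ := (t + -s0) - n * (2*π) with hθ_def
        have h2π : (0:ℝ) < 2*π := by positivity
        have hθmem : θ ∈ Icc (0:ℝ) (2*π) := by
          have h1 : (n:ℝ) * (2*π) ≤ t + -s0 := (le_div_iff₀ h2π).mp (Int.floor_le _)
          have h2 : t + -s0 < ((n:ℝ) + 1) * (2*π) := (div_lt_iff₀ h2π).mp (Int.lt_floor_add_one _)
          constructor
          · rw [hθ_def]; linarith
          · rw [hθ_def]; nlinarith
        have huθ : uvec θ = uvec (t + -s0) := by
          apply E2_ext
          · show Real.cos θ = Real.cos (t + -s0)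
            rw [hθ_def]; exact Real.cos_sub_int_mul_two_pi _ n
          · show Real.sin θ = Real.sin (t + -s0)
            rw [hθ_def]; exact Real.sin_sub_int_mul_two_pi _ n
        have hhθ : h (θ + s0) = h t := by
          have e1 : θ + s0 = t - ((2*n : ℤ) : ℝ) * π := by
            rw [hθ_def]; push_cast; ring
          rw [e1]
          exact hP.sub_int_mul_eq (2*n)
        refine ⟨c * a, θ, by positivity, ?_, hθmem, ?_⟩
        · show c * a ≤ c / h (θ + s0)
          rw [hhθ, le_div_iff₀ (hpos_h t)]
          nlinarith [hHξ, hcpos, hpos_h t]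
        · rw [hξeq, rot_smul, smul_smul, ← huθ]
          exact E2_ext rfl rfl
    · rintro ⟨ρ, θ, hρ0, hρrt, hθmem, rfl⟩
      rcases eq_or_lt_of_le hρ0 with hρeq | hρpos
      · refine ⟨0, by simpa using le_of_lt one_pos |>.trans_eq' (by rw [hH0]) , ?_⟩
        rw [← hρeq]
        apply E2_ext
        · show c * (Real.cos (-s0) * (0:ℝ) - Real.sin (-s0) * (0:ℝ)) = 0 * Real.cos θ
          ring
        · show c * (Real.sin (-s0) * (0:ℝ) + Real.cos (-s0) * (0:ℝ)) = 0 * Real.sin θ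
          ring
      · refine ⟨(ρ/c) • uvec (θ + s0), ?_, ?_⟩
        · show H ((ρ/c) • uvec (θ + s0)) ≤ 1
          rw [hhom (ρ/c) (by positivity) _ (uvec_ne_zero _)]
          have h1 : ρ ≤ c / h (θ + s0) := hρrt
          have h2 := hpos_h (θ + s0)
          rw [le_div_iff₀ h2] at h1
          rw [div_mul_eq_mul_div, div_le_one hcpos]
          have : H (uvec (θ + s0)) = h (θ + s0) := rfl
          rw [this]
          exact h1
        · rw [rot_smul, smul_smul]
          have e1 : θ + s0 + -s0 = θ := by ring
          rw [e1]
          have e2 : c * (ρ/c) = ρ := by field_simp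
          rw [e2]
          exact E2_ext rfl rfl

end
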